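/- For every n ≥ 1, the reduced subcomplex D*^{⊗̄n} ⊆ D*^{⊗n} has cohomology equal to a free rank-one k-module generated by 1⊗⋯⊗1 in degree 0 and equal to 0 in every degree i > 0; consequently the inclusion D*^{⊗̄n} ↪ D*^{⊗n} is a quasi-isomorphism of complexes. -/

import Mathlib

/-- Basis labels for the differential graded algebra `D*` over `k`:
`one` is the constant function `1` (degree 0), `Y s` is the Heaviside function
with singular support `{s}` (degree 0), and `om s` is the Dirac function with
singular support `{s}` (degree 1). -/
inductive DB : Type
  | one : DB
  | Y : ℤ → DB
  | om : ℤ → DB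
  deriving DecidableEq

/-- cohomological degree of a basis element -/
def DB.deg : DB → ℕ
  | .one => 0
  | .Y _ => 0
  | .om _ => 1

/-- singular support of a basis element -/
def DB.supp : DB → Finset ℤ
  | .one => ∅
  | .Y s => {s}
  | .om s => {s}

variable (k : Type) [CommRing k]

/-- The `n`-fold tensor power `D*^{⊗n}` of the complex `D*` over `k`, modelled as the
free `k`-module on the basis of decomposable tensors `f₁ ⊗ ⋯ ⊗ f_n` of basis elements. -/
abbrev Tot (n : ℕ) : Type := (Fin n → DB) →₀ k

/-- total (cohomological) degree of a basis tensor -/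
def degT {n : ℕ} (g : Fin n → DB) : ℕ := ∑ i, (g i).deg

/-- the homogeneous degree-`i` component of `D*^{⊗n}` -/
def homog (n i : ℕ) : Submodule k (Tot k n) where
  carrier := {x | ∀ g, x g ≠ 0 → degT g = i}
  add_mem' := by
    intro x y hx hy g hg
    by_cases h : x g = 0
    · refine hy g ?_
      intro h'; apply hg; simp [Finsupp.add_apply, h, h']
    · exact hx g h
  zero_mem' := by intro g hg; simp at hg
  smul_mem' := by
    intro c x hx g hg
    refine hx g fun h => hg ?_
    simp [Finsupp.smul_apply, h]

lemma mem_homog {n i : ℕ} {x : Tot k n} :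
    x ∈ homog k n i ↔ ∀ g, x g ≠ 0 → degT g = i := Iff.rfl

/-- `I` : the span of the basis tensors `f₀ ⊗ ⋯ ⊗ f_r` in which every factor is a
Heaviside or a Dirac function (no factor equals `1`). -/
def noOne (n : ℕ) : Submodule k (Tot k n) where
  carrier := {x | ∀ g, x g ≠ 0 → ∀ i, g i ≠ DB.one}
  add_mem' := by
    intro x y hx hy g hg
    by_cases h : x g = 0
    · refine hy g ?_
      intro h'; apply hg; simp [Finsupp.add_apply, h, h']
    · exact hx g h
  zero_mem' := by intro g hg; simp at hg
  smul_mem' := by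
    intro c x hx g hg
    refine hx g fun h => hg ?_
    simp [Finsupp.smul_apply, h]

lemma mem_noOne {n : ℕ} {x : Tot k n} :
    x ∈ noOne k n ↔ ∀ g, x g ≠ 0 → ∀ i, g i ≠ DB.one := Iff.rfl

/-- The Koszul-sign differential on a basis tensor:
`d(f₁ ⊗ ⋯ ⊗ f_n) = Σ_i (-1)^{deg f₁ + ⋯ + deg f_{i-1}} f₁ ⊗ ⋯ ⊗ d f_i ⊗ ⋯ ⊗ f_n`,
where `d(Y s) = - ω_s`, `d 1 = 0`, `d (ω s) = 0`. -/
noncomputable def dB {n : ℕ} (g : Fin n → DB) : Tot k n :=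
  ∑ i : Fin n,
    match g i with
    | DB.Y s =>
        Finsupp.single (Function.update g i (DB.om s))
          (-(-1 : k) ^ (∑ j ∈ Finset.univ.filter (fun j : Fin n => j < i), (g j).deg))
    | _ => (0 : Tot k n)

/-- the total differential of the complex `D*^{⊗n}` (it raises degree by one) -/
noncomputable def dT (n : ℕ) : Tot k n →ₗ[k] Tot k n :=
  Finsupp.linearCombination k (dB k (n := n))


/-- The reduced subcomplex `D*^{⊗̄n} ⊆ D*^{⊗n}` : the span of the basis tensors
`f₁ ⊗ ⋯ ⊗ f_n` whose factors have pairwise disjoint singular supports. -/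
def reduced (n : ℕ) : Submodule k (Tot k n) where
  carrier := {x | ∀ g, x g ≠ 0 → ∀ i j : Fin n, i ≠ j → Disjoint ((g i).supp) ((g j).supp)}
  add_mem' := by
    intro x y hx hy g hg
    by_cases h : x g = 0
    · refine hy g ?_
      intro h'; apply hg; simp [Finsupp.add_apply, h, h']
    · exact hx g h
  zero_mem' := by intro g hg; simp at hg
  smul_mem' := by
    intro c x hx g hg
    refine hx g fun h => hg ?_
    simp [Finsupp.smul_apply, h]

lemma mem_reduced {n : ℕ} {x : Tot k n} :
    x ∈ reduced k n ↔
      ∀ g, x g ≠ 0 → ∀ i j : Fin n, i ≠ j → Disjoint ((g i).supp) ((g j).supp) := Iff.rfl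

/-- Koszul homotopy on a basis tensor. -/
noncomputable def HB {n : ℕ} (g : Fin n → DB) : Tot k n :=
  ∑ j : Fin n,
    if (∀ l, l < j → g l = DB.one) then
      (match g j with
       | DB.om s => -Finsupp.single (Function.update g j (DB.Y s)) (1 : k)
       | _ => (0 : Tot k n))
    else 0

noncomputable def HT (n : ℕ) : Tot k n →ₗ[k] Tot k n :=
  Finsupp.linearCombination k (HB k (n := n))

lemma dT_single {n : ℕ} (g : Fin n → DB) (c : k) :
    dT k n (Finsupp.single g c) = c • dB k g :=
  Finsupp.linearCombination_single k c g

lemma HT_single {n : ℕ} (g : Fin n → DB) (c : k) :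
    HT k n (Finsupp.single g c) = c • HB k g :=
  Finsupp.linearCombination_single k c g
lemma dB_support {n : ℕ} (g h : Fin n → DB) (hne : dB k g h ≠ 0) :
    ∃ j s, g j = DB.Y s ∧ h = Function.update g j (DB.om s) := by
  rw [dB, Finsupp.finset_sum_apply] at hne
  obtain ⟨j, -, hj⟩ := Finset.exists_ne_zero_of_sum_ne_zero hne
  cases hgj : g j with
  | one => rw [hgj] at hj; simp at hj
  | Y s =>
    refine ⟨j, s, hgj, ?_⟩
    rw [hgj] at hj
    simp only [Finsupp.single_apply] at hj
    by_contra hh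
    rw [if_neg (fun e => hh e.symm)] at hj
    exact hj rfl
  | om s => rw [hgj] at hj; simp at hj

lemma HB_support {n : ℕ} (g h : Fin n → DB) (hne : HB k g h ≠ 0) :
    ∃ j s, g j = DB.om s ∧ h = Function.update g j (DB.Y s) := by
  rw [HB, Finsupp.finset_sum_apply] at hne
  obtain ⟨j, -, hj⟩ := Finset.exists_ne_zero_of_sum_ne_zero hne
  by_cases hc : ∀ l, l < j → g l = DB.one
  · rw [if_pos hc] at hj
    cases hgj : g j with
    | one => rw [hgj] at hj; simp at hj
    | Y s => rw [hgj] at hj; simp at hj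
    | om s =>
      refine ⟨j, s, hgj, ?_⟩
      rw [hgj] at hj
      simp only [Finsupp.neg_apply, Finsupp.single_apply, neg_ne_zero] at hj
      by_contra hh
      rw [if_neg (fun e => hh e.symm)] at hj
      exact hj rfl
  · rw [if_neg hc] at hj; simp at hj
lemma degT_update_Y {n : ℕ} (g : Fin n → DB) (j : Fin n) (s : ℤ) (hg : g j = DB.om s) :
    degT (Function.update g j (DB.Y s)) + 1 = degT g := by
  unfold degT
  rw [← Finset.add_sum_erase _ _ (Finset.mem_univ j),
      ← Finset.add_sum_erase _ (fun i => (g i).deg) (Finset.mem_univ j)]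
  rw [Function.update_self, hg]
  have : ∀ i ∈ Finset.univ.erase j, ((Function.update g j (DB.Y s)) i).deg = (g i).deg := by
    intro i hi
    rw [Function.update_of_ne (Finset.ne_of_mem_erase hi)]
  rw [Finset.sum_congr rfl this]
  simp [DB.deg]
  ring

lemma supp_update_Y {n : ℕ} (g : Fin n → DB) (j : Fin n) (s : ℤ) (hg : g j = DB.om s)
    (i : Fin n) : ((Function.update g j (DB.Y s)) i).supp = (g i).supp := by
  by_cases hij : i = j
  · subst hij; rw [Function.update_self, hg]; rfl
  · rw [Function.update_of_ne hij]

lemma HT_mem_homog {n i : ℕ} {z : Tot k n} (hz : z ∈ homog k n (i + 1)) :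
    HT k n z ∈ homog k n i := by
  rw [HT, Finsupp.linearCombination_apply, Finsupp.sum]
  refine Submodule.sum_mem _ fun g hg => Submodule.smul_mem _ _ ?_
  intro h hh
  obtain ⟨j, s, hgj, rfl⟩ := HB_support k g h hh
  have hd := hz g (Finsupp.mem_support_iff.mp hg)
  have := degT_update_Y g j s hgj
  omega

lemma HT_mem_reduced {n : ℕ} {z : Tot k n} (hz : z ∈ reduced k n) :
    HT k n z ∈ reduced k n := by
  rw [HT, Finsupp.linearCombination_apply, Finsupp.sum]
  refine Submodule.sum_mem _ fun g hg => Submodule.smul_mem _ _ ?_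
  intro h hh a b hab
  obtain ⟨j, s, hgj, rfl⟩ := HB_support k g h hh
  rw [supp_update_Y g j s hgj, supp_update_Y g j s hgj]
  exact hz g (Finsupp.mem_support_iff.mp hg) a b hab

lemma dB_apply_allone {n : ℕ} (g : Fin n → DB) : dB k g (fun _ => DB.one) = 0 := by
  by_contra h
  obtain ⟨j, s, hgj, he⟩ := dB_support k g _ h
  have := congrFun he j
  rw [Function.update_self] at this
  exact DB.noConfusion this

lemma dT_apply_allone {n : ℕ} (u : Tot k n) : dT k n u (fun _ => DB.one) = 0 := by
  rw [dT, Finsupp.linearCombination_apply, Finsupp.sum, Finsupp.finset_sum_apply]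
  refine Finset.sum_eq_zero fun g _ => ?_
  rw [Finsupp.smul_apply, dB_apply_allone, smul_zero]

lemma dB_allone {n : ℕ} : dB k (fun _ : Fin n => DB.one) = 0 := by
  unfold dB; exact Finset.sum_eq_zero fun j _ => rfl

lemma HB_deg0 {n : ℕ} (g : Fin n → DB) (hg : degT g = 0) : HB k g = 0 := by
  by_contra h
  obtain ⟨h0, hh0⟩ := Finsupp.ne_iff.mp h
  rw [Finsupp.zero_apply] at hh0
  obtain ⟨j, s, hgj, -⟩ := HB_support k g h0 hh0
  have : (g j).deg = 0 := by
    have := Finset.sum_eq_zero_iff.mp hg j (Finset.mem_univ j)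
    exact this
  rw [hgj] at this
  simp [DB.deg] at this

lemma HT_deg0 {n : ℕ} {z : Tot k n} (hz : z ∈ homog k n 0) : HT k n z = 0 := by
  rw [HT, Finsupp.linearCombination_apply, Finsupp.sum]
  refine Finset.sum_eq_zero fun g hg => ?_
  rw [HB_deg0 k g (hz g (Finsupp.mem_support_iff.mp hg)), smul_zero]
lemma HB_eq_of {n : ℕ} (h : Fin n → DB) (j₁ : Fin n)
    (h1 : ∀ l, l < j₁ → h l = DB.one) (h2 : h j₁ ≠ DB.one) :
    HB k h = (match h j₁ with
      | DB.om s => -Finsupp.single (Function.update h j₁ (DB.Y s)) (1 : k)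
      | _ => (0 : Tot k n)) := by
  rw [HB]
  rw [Finset.sum_eq_single_of_mem j₁ (Finset.mem_univ _)]
  · rw [if_pos h1]
  · intro b _ hb
    rcases lt_or_gt_of_ne hb with hlt | hgt
    · by_cases hc : ∀ l, l < b → h l = DB.one
      · rw [if_pos hc, h1 b hlt]
      · rw [if_neg hc]
    · rw [if_neg]
      intro hc
      exact h2 (hc j₁ hgt)
lemma homotopy_basis {n : ℕ} (g : Fin n → DB) :
    dT k n (HB k g) + HT k n (dB k g)
      = Finsupp.single g (1 : k)
        - (if g = (fun _ => DB.one) then Finsupp.single g (1 : k) else 0) := by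
  by_cases hA : g = fun _ => DB.one
  · rw [if_pos hA, sub_self, hA]
    have h1 : HB k (fun _ : Fin n => DB.one) = 0 := by
      rw [HB]
      refine Finset.sum_eq_zero fun j _ => ?_
      split <;> rfl
    rw [h1, dB_allone, map_zero, map_zero, add_zero]
  · have hS : (Finset.univ.filter (fun j : Fin n => g j ≠ DB.one)).Nonempty := by
      by_contra hc
      rw [Finset.not_nonempty_iff_eq_empty] at hc
      apply hA
      funext j
      by_contra hj
      have : j ∈ Finset.univ.filter (fun j : Fin n => g j ≠ DB.one) :=
        Finset.mem_filter.mpr ⟨Finset.mem_univ _, hj⟩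
      rw [hc] at this
      exact absurd this (Finset.notMem_empty j)
    set j₀ := (Finset.univ.filter (fun j : Fin n => g j ≠ DB.one)).min' hS with hj₀def
    have hj₀ : g j₀ ≠ DB.one :=
      (Finset.mem_filter.mp (Finset.min'_mem _ hS)).2
    have hmin : ∀ l, l < j₀ → g l = DB.one := by
      intro l hl
      by_contra hc
      exact absurd (Finset.min'_le _ l (Finset.mem_filter.mpr ⟨Finset.mem_univ _, hc⟩))
        (not_le.mpr hl)
    rw [if_neg hA, sub_zero]
    rcases hg0 : g j₀ with _ | s | s
    · exact absurd hg0 hj₀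
    · -- g j₀ = Y s
      have hHB : HB k g = 0 := by
        rw [HB_eq_of k g j₀ hmin hj₀, hg0]
      rw [hHB, map_zero, zero_add, dB, map_sum]
      rw [Finset.sum_eq_single_of_mem j₀ (Finset.mem_univ _)]
      · have he : (∑ l ∈ Finset.univ.filter (fun l : Fin n => l < j₀), (g l).deg) = 0 := by
          refine Finset.sum_eq_zero fun l hl => ?_
          rw [hmin l (Finset.mem_filter.mp hl).2]; rfl
        simp only [hg0, he, pow_zero]
        rw [HT_single]
        have hupd : ∀ l, l < j₀ → (Function.update g j₀ (DB.om s)) l = DB.one := by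
          intro l hl
          rw [Function.update_of_ne (ne_of_lt hl), hmin l hl]
        have hne : (Function.update g j₀ (DB.om s)) j₀ ≠ DB.one := by
          rw [Function.update_self]; exact fun h => DB.noConfusion h
        rw [HB_eq_of k _ j₀ hupd hne]
        simp only [Function.update_self]
        rw [Function.update_idem]
        have hself : Function.update g j₀ (DB.Y s) = g := by
          rw [← hg0, Function.update_eq_self]
        rw [hself]
        simp
      · intro b _ hb
        rcases hgb : g b with _ | t | t
        · simp only [hgb]; exact map_zero _
        · have hj₀b : j₀ < b := by
            rcases lt_or_gt_of_ne hb with hlt | hgt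
            · rw [hmin b hlt] at hgb; exact absurd hgb (fun h => DB.noConfusion h)
            · exact hgt
          simp only [hgb]
          rw [HT_single]
          have hupd : ∀ l, l < j₀ → (Function.update g b (DB.om t)) l = DB.one := by
            intro l hl
            rw [Function.update_of_ne (ne_of_lt (hl.trans hj₀b)), hmin l hl]
          have hne : (Function.update g b (DB.om t)) j₀ ≠ DB.one := by
            rw [Function.update_of_ne (ne_of_lt hj₀b), hg0]
            exact fun h => DB.noConfusion h
          rw [HB_eq_of k _ j₀ hupd hne]
          rw [Function.update_of_ne (ne_of_lt hj₀b), hg0]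
          exact smul_zero _
        · simp only [hgb]; exact map_zero _
    · -- g j₀ = om s
      set g' := Function.update g j₀ (DB.Y s) with hg'def
      have hg'0 : g' j₀ = DB.Y s := Function.update_self j₀ (DB.Y s) g
      have hHB : HB k g = -Finsupp.single g' (1 : k) := by
        rw [HB_eq_of k g j₀ hmin hj₀, hg0]
      rw [hHB, map_neg, dT_single, one_smul]
      rw [dB, dB, map_sum, neg_add_eq_sub, ← Finset.sum_sub_distrib]
      rw [Finset.sum_eq_single_of_mem j₀ (Finset.mem_univ _)]
      · have he' : (∑ l ∈ Finset.univ.filter (fun l : Fin n => l < j₀), (g' l).deg) = 0 := by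
          refine Finset.sum_eq_zero fun l hl => ?_
          have hl' := (Finset.mem_filter.mp hl).2
          rw [hg'def, Function.update_of_ne (ne_of_lt hl'), hmin l hl']; rfl
        simp only [hg0, hg'0, he', pow_zero]
        rw [map_zero, Function.update_idem]
        have hself : Function.update g j₀ (DB.om s) = g := by
          rw [← hg0, Function.update_eq_self]
        rw [hself]
        simp
      · intro b _ hb
        rcases hgb : g b with _ | t | t
        · have hg'b : g' b = DB.one := by
            rw [hg'def, Function.update_of_ne hb, hgb]
          simp only [hgb, hg'b]
          rw [map_zero, sub_zero]
        · have hj₀b : j₀ < b := by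
            rcases lt_or_gt_of_ne hb with hlt | hgt
            · rw [hmin b hlt] at hgb; exact absurd hgb (fun h => DB.noConfusion h)
            · exact hgt
          have hg'b : g' b = DB.Y t := by
            rw [hg'def, Function.update_of_ne hb, hgb]
          simp only [hgb, hg'b]
          rw [HT_single]
          have hupd : ∀ l, l < j₀ → (Function.update g b (DB.om t)) l = DB.one := by
            intro l hl
            rw [Function.update_of_ne (ne_of_lt (hl.trans hj₀b)), hmin l hl]
          have hne : (Function.update g b (DB.om t)) j₀ ≠ DB.one := by
            rw [Function.update_of_ne (ne_of_lt hj₀b), hg0]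
            exact fun h => DB.noConfusion h
          rw [HB_eq_of k _ j₀ hupd hne]
          simp only [Function.update_of_ne (ne_of_lt hj₀b), hg0]
          have hcomm : Function.update (Function.update g b (DB.om t)) j₀ (DB.Y s)
              = Function.update g' b (DB.om t) := by
            rw [hg'def, Function.update_comm hb]
          rw [hcomm]
          have hmem : j₀ ∈ Finset.univ.filter (fun l : Fin n => l < b) :=
            Finset.mem_filter.mpr ⟨Finset.mem_univ _, hj₀b⟩
          have hkey : (∑ l ∈ Finset.univ.filter (fun l : Fin n => l < b), (g l).deg)
              = (∑ l ∈ Finset.univ.filter (fun l : Fin n => l < b), (g' l).deg) + 1 := by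
            rw [← Finset.add_sum_erase _ (fun l => (g l).deg) hmem,
                ← Finset.add_sum_erase _ (fun l => (g' l).deg) hmem]
            have hE : ∑ l ∈ (Finset.univ.filter (fun l : Fin n => l < b)).erase j₀, (g l).deg
                = ∑ l ∈ (Finset.univ.filter (fun l : Fin n => l < b)).erase j₀, (g' l).deg := by
              refine Finset.sum_congr rfl fun l hl => ?_
              rw [hg'def, Function.update_of_ne (Finset.ne_of_mem_erase hl)]
            rw [hE, hg0, hg'0]
            simp [DB.deg]
            omega
          rw [hkey, pow_succ, smul_neg, Finsupp.smul_single, smul_eq_mul, mul_one]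
          rw [mul_neg_one, neg_neg, Finsupp.single_neg, sub_neg_eq_add, neg_add_cancel]
        · have hg'b : g' b = DB.om t := by
            rw [hg'def, Function.update_of_ne hb, hgb]
          simp only [hgb, hg'b]
          rw [map_zero, sub_zero]
lemma homotopy {n : ℕ} (x : Tot k n) :
    dT k n (HT k n x) + HT k n (dT k n x)
      = x - x (fun _ => DB.one) • Finsupp.single (fun _ => DB.one) (1 : k) := by
  induction x using Finsupp.induction_linear with
  | zero => simp
  | add f g hf hg =>
      rw [map_add, map_add, map_add, map_add]
      rw [show ∀ a b c d : Tot k n, (a + b) + (c + d) = (a + c) + (b + d) from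
        fun a b c d => by abel]
      rw [hf, hg, Finsupp.add_apply, add_smul]
      abel
  | single g c =>
      rw [HT_single, dT_single, map_smul, map_smul, ← smul_add, homotopy_basis,
        Finsupp.single_apply]
      by_cases hA : g = fun _ => DB.one
      · subst hA
        simp [Finsupp.smul_single]
      · rw [if_neg hA, if_neg hA, sub_zero, zero_smul, sub_zero, Finsupp.smul_single,
          smul_eq_mul, mul_one]
/-- For every `n ≥ 1`, the reduced subcomplex `D*^{⊗̄n} ⊆ D*^{⊗n}` has
cohomology equal to a free rank-one `k`-module generated by `1 ⊗ ⋯ ⊗ 1` in degree `0`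
and equal to `0` in every degree `i > 0`; consequently the inclusion
`D*^{⊗̄n} ↪ D*^{⊗n}` is a quasi-isomorphism (bijective on cohomology in every degree). -/
theorem statement4 (k : Type) [CommRing k] (n : ℕ) (hn : 1 ≤ n) :
    -- `1 ⊗ ⋯ ⊗ 1` is a degree-0 cocycle of the reduced subcomplex
    (Finsupp.single (fun _ : Fin n => DB.one) (1 : k) ∈ reduced k n ⊓ homog k n 0 ∧
      dT k n (Finsupp.single (fun _ : Fin n => DB.one) (1 : k)) = 0) ∧
    -- it generates a free rank-one `k`-module
    Function.Injective (fun c : k => c • Finsupp.single (fun _ : Fin n => DB.one) (1 : k)) ∧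
    -- `H⁰` of the reduced subcomplex is generated by `1 ⊗ ⋯ ⊗ 1`
    (∀ z ∈ reduced k n ⊓ homog k n 0, dT k n z = 0 →
        ∃ c : k, z = c • Finsupp.single (fun _ : Fin n => DB.one) (1 : k)) ∧
    -- `H^i` of the reduced subcomplex vanishes for `i > 0`
    (∀ i : ℕ, ∀ z ∈ reduced k n ⊓ homog k n (i + 1), dT k n z = 0 →
        ∃ w ∈ reduced k n ⊓ homog k n i, dT k n w = z) ∧
    -- the inclusion is surjective on cohomology …
    (∀ i : ℕ, ∀ z ∈ homog k n i, dT k n z = 0 →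
        ∃ w ∈ reduced k n ⊓ homog k n i, dT k n w = 0 ∧ ∃ u : Tot k n, z - w = dT k n u) ∧
    -- … and injective on cohomology
    (∀ i : ℕ, ∀ w ∈ reduced k n ⊓ homog k n i, dT k n w = 0 →
        (∃ u : Tot k n, dT k n u = w) → ∃ u' ∈ reduced k n, dT k n u' = w) := by
  set A : Fin n → DB := fun _ => DB.one with hAdef
  have hdegA : degT A = 0 := Finset.sum_eq_zero fun _ _ => rfl
  have hsingle_ne : ∀ g : Fin n → DB, Finsupp.single A (1 : k) g ≠ 0 → g = A := by
    intro g hg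
    by_contra hc
    rw [Finsupp.single_apply, if_neg (fun h => hc h.symm)] at hg
    exact hg rfl
  have hered : Finsupp.single A (1 : k) ∈ reduced k n := by
    rw [mem_reduced]
    intro g hg i j hij
    rw [hsingle_ne g hg]
    simp [hAdef, DB.supp]
  have hehom : Finsupp.single A (1 : k) ∈ homog k n 0 := by
    rw [mem_homog]
    intro g hg
    rw [hsingle_ne g hg, hdegA]
  have hde : dT k n (Finsupp.single A (1 : k)) = 0 := by
    rw [dT_single, hAdef, dB_allone, smul_zero]
  refine ⟨⟨Submodule.mem_inf.mpr ⟨hered, hehom⟩, hde⟩, ?_, ?_, ?_, ?_, ?_⟩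
  · -- injectivity of c ↦ c • e
    intro a b hab
    have := congrArg (fun f : Tot k n => f A) hab
    simpa [Finsupp.single_eq_same] using this
  · -- H⁰
    intro z hz hdz
    refine ⟨z A, ?_⟩
    have h := homotopy k z
    rw [HT_deg0 k (Submodule.mem_inf.mp hz).2, hdz, map_zero, map_zero, add_zero] at h
    rw [← sub_eq_zero]
    exact h.symm
  · -- H^{i+1} = 0
    intro i z hz hdz
    obtain ⟨hzr, hzh⟩ := Submodule.mem_inf.mp hz
    refine ⟨HT k n z, Submodule.mem_inf.mpr ⟨HT_mem_reduced k hzr, HT_mem_homog k hzh⟩, ?_⟩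
    have hzA : z A = 0 := by
      by_contra hc
      have := hzh A hc
      omega
    have h := homotopy k z
    rw [hdz, map_zero, add_zero, hzA, zero_smul, sub_zero] at h
    exact h
  · -- surjectivity on cohomology
    intro i z hz hdz
    refine ⟨z A • Finsupp.single A (1 : k), ?_, ?_, HT k n z, ?_⟩
    · refine Submodule.mem_inf.mpr ⟨Submodule.smul_mem _ _ hered, ?_⟩
      by_cases hzA : z A = 0
      · rw [hzA, zero_smul]; exact Submodule.zero_mem _
      · have hi : i = 0 := by rw [← hz A hzA, hdegA]
        rw [hi]
        exact Submodule.smul_mem _ _ hehom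
    · rw [map_smul, hde, smul_zero]
    · have h := homotopy k z
      rw [hdz, map_zero, add_zero] at h
      exact h.symm
  · -- injectivity on cohomology
    intro i w hw hdw hu
    obtain ⟨u, hu⟩ := hu
    have hwA : w A = 0 := by rw [← hu, hAdef]; exact dT_apply_allone k u
    refine ⟨HT k n w, HT_mem_reduced k (Submodule.mem_inf.mp hw).1, ?_⟩
    have h := homotopy k w
    rw [hdw, map_zero, add_zero, hwA, zero_smul, sub_zero] at h
    exact h
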